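/- Let (M,g) be a connected Riemannian manifold and F : ℝ → ℝ a smooth function. If the generalized Einstein tensor satisfies E_F(g) = f·g for some smooth function f on M, then f is constant. -/

import Mathlib

/-!
**STATEMENT 5.**  Let `(M, g)` be a connected Riemannian manifold and
`F : ℝ → ℝ` a smooth function.  If the generalized Einstein tensor satisfies
`E_F(g) = f·g` for some smooth function `f` on `M`, then `f` is constant.

The encoding is as in Statement 4: smooth functions on `M` are elements of
`M → ℝ`, `Sym2T` is the space of symmetric `2`-covariant tensor fields, `OneF`
the `1`-forms, `VF` the vector fields, and the geometric operators of `(M, g)`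
are given abstractly, subject to their characteristic identities (including
those making `E_F(g)` divergence-free, which is the key to the proof).
Connectedness of `M` is expressed by `[ConnectedSpace M]`, together with the
fact that on a connected manifold a smooth function with vanishing
differential is constant.
-/
theorem F_Einstein_tensor_proportional_to_metric_factor_is_constant
    {M VF : Type*} [TopologicalSpace M] [ConnectedSpace M]
    {Sym2T OneF : Type*}
    [AddCommGroup Sym2T] [Module (M → ℝ) Sym2T]
    [AddCommGroup OneF] [Module (M → ℝ) OneF] [Module ℝ OneF]
    -- the geometric data of the Riemannian manifold (M, g)
    (gmet Ric : Sym2T) (S : M → ℝ)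
    (Hess : (M → ℝ) → Sym2T) (lap : (M → ℝ) → M → ℝ)
    (grad : (M → ℝ) → VF)
    (d : (M → ℝ) → OneF)
    (δ2 : Sym2T →+ OneF)
    (ctr : Sym2T → VF → OneF)
    -- F is a smooth function on ℝ
    (F : ℝ → ℝ) (hF : ContDiff ℝ (⊤ : ℕ∞) F)
    -- characteristic identities of the operators
    (hδsmul : ∀ (u : M → ℝ) (T : Sym2T), δ2 (u • T) = u • δ2 T - ctr T (grad u))
    (hδHess : ∀ u : M → ℝ, δ2 (Hess u) = d (lap u) - ctr Ric (grad u))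
    (hδg : δ2 gmet = 0)
    (hctrg : ∀ u : M → ℝ, ctr gmet (grad u) = d u)
    (hdadd : ∀ u w : M → ℝ, d (u + w) = d u + d w)
    (hdchain : ∀ (φ : ℝ → ℝ) (u : M → ℝ), ContDiff ℝ (⊤ : ℕ∞) φ →
      d (φ ∘ u) = (deriv φ ∘ u) • d u)
    (hBianchi : δ2 Ric = -((1 / 2 : ℝ) • d S))
    -- on a connected manifold, a function with vanishing differential is constant
    (hdconst : ∀ u : M → ℝ, d u = 0 → ∀ x y : M, u x = u y)
    -- hypothesis : E_F(g) = f • g for a smooth function f on M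
    (f : M → ℝ)
    (hEf : (deriv F ∘ S) • Ric - Hess (deriv F ∘ S)
        - (lap (deriv F ∘ S) + (1 / 2 : ℝ) • (F ∘ S)) • gmet = f • gmet) :
    -- conclusion: f is a constant function on M
    ∀ x y : M, f x = f y := by

  classical
  set u : M → ℝ := deriv F ∘ S with hu
  set φ : ℝ → ℝ := fun t => (1 / 2 : ℝ) * F t with hφ
  have hφdiff : ContDiff ℝ (⊤ : ℕ∞) φ := by
    have := hF.const_smul (1 / 2 : ℝ)
    simpa [hφ, smul_eq_mul] using this
  have hcomp : (1 / 2 : ℝ) • (F ∘ S) = φ ∘ S := by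
    funext x
    simp [hφ, Function.comp, Pi.smul_apply, smul_eq_mul]
  have hderφ : ∀ t : ℝ, deriv φ t = (1 / 2 : ℝ) * deriv F t := by
    intro t
    exact deriv_const_mul _ ((hF.differentiable (by simp)) t)
  have hsum : (deriv φ ∘ S) + (deriv φ ∘ S) = u := by
    funext x
    simp only [Pi.add_apply, Function.comp, hderφ, hu]
    ring
  have h2 : δ2 (u • Ric - Hess u - (lap u + (1 / 2 : ℝ) • (F ∘ S)) • gmet)
      = δ2 (f • gmet) := by rw [hEf]
  rw [map_sub, map_sub, hδsmul, hδsmul, hδsmul, hδHess, hδg, hBianchi, hctrg, hctrg,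
    hcomp, hdadd, hdchain φ S hφdiff] at h2
  simp only [smul_zero, zero_sub, smul_neg] at h2
  have h3 : d f = u • ((1 / 2 : ℝ) • d S) - (deriv φ ∘ S) • d S := by
    have := h2
    rw [← neg_inj]
    rw [← this]
    abel
  have ha : u • ((1 / 2 : ℝ) • d S) + u • ((1 / 2 : ℝ) • d S) = u • d S := by
    rw [← smul_add, ← add_smul]
    norm_num
  have hb : (deriv φ ∘ S) • d S + (deriv φ ∘ S) • d S = u • d S := by
    rw [← add_smul, hsum]
  have h4 : d f + d f = 0 := by
    calc d f + d f
        = (u • ((1 / 2 : ℝ) • d S) + u • ((1 / 2 : ℝ) • d S))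
          - ((deriv φ ∘ S) • d S + (deriv φ ∘ S) • d S) := by rw [h3]; abel
      _ = u • d S - u • d S := by rw [ha, hb]
      _ = 0 := sub_self _
  have h5 : (2 : ℝ) • d f = 0 := by rw [two_smul]; exact h4
  have h6 : d f = 0 := by
    have := congrArg (fun v => (2⁻¹ : ℝ) • v) h5
    simpa [smul_smul] using this
  exact hdconst f h6
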